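/- Let M be an n×n real matrix and let ε > 0. Then there exists a function N from n×n real matrices to ℝ that is a submultiplicative matrix norm — i.e., N(X) ≥ 0 with N(X) = 0 iff X = 0, N(cX) = |c|·N(X) for all c ∈ ℝ, N(X+Y) ≤ N(X) + N(Y), and N(XY) ≤ N(X)·N(Y) for all X, Y — such that N(M) ≤ ρ(M) + ε, where ρ(M) denotes the spectral radius of M. -/

import Mathlib

open scoped ENNReal

attribute [local instance] Matrix.linftyOpNormedAddCommGroup Matrix.linftyOpNormedRing
  Matrix.linftyOpNormedAlgebra Matrix.linftyOpNormedSpace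

noncomputable instance matCompl {n : ℕ} : CompleteSpace (Matrix (Fin n) (Fin n) ℂ) :=
  FiniteDimensional.complete ℂ (Matrix (Fin n) (Fin n) ℂ)

/-- The spectral radius of a real square matrix: the maximum modulus of the complex
roots of its characteristic polynomial. -/
noncomputable def specRad {n : ℕ} (M : Matrix (Fin n) (Fin n) ℝ) : ℝ :=
  sSup {x : ℝ | ∃ z ∈ (M.map (Complex.ofReal : ℝ → ℂ)).charpoly.roots, ‖z‖ = x}

variable {n : ℕ}

lemma S_finite (M : Matrix (Fin n) (Fin n) ℝ) :
    {x : ℝ | ∃ z ∈ (M.map (Complex.ofReal : ℝ → ℂ)).charpoly.roots, ‖z‖ = x}.Finite := by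
  have : {x : ℝ | ∃ z ∈ (M.map (Complex.ofReal : ℝ → ℂ)).charpoly.roots, ‖z‖ = x}
      = (fun z : ℂ => ‖z‖) '' ((M.map (Complex.ofReal : ℝ → ℂ)).charpoly.roots.toFinset : Set ℂ) := by
    ext x; simp [eq_comm]
  rw [this]
  exact Set.Finite.image _ (Finset.finite_toSet _)

lemma charpoly_ne (A : Matrix (Fin n) (Fin n) ℂ) : A.charpoly ≠ 0 :=
  (Matrix.charpoly_monic A).ne_zero

lemma S_nonempty (hn : 0 < n) (M : Matrix (Fin n) (Fin n) ℝ) :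
    {x : ℝ | ∃ z ∈ (M.map (Complex.ofReal : ℝ → ℂ)).charpoly.roots, ‖z‖ = x}.Nonempty := by
  set A := M.map (Complex.ofReal : ℝ → ℂ)
  have hdeg : 0 < A.charpoly.degree := by
    rw [Polynomial.natDegree_pos_iff_degree_pos.symm, Matrix.charpoly_natDegree_eq_dim]
    simpa using hn
  obtain ⟨z, hz⟩ := Complex.exists_root hdeg
  exact ⟨‖z‖, ⟨z, (Polynomial.mem_roots (charpoly_ne A)).2 hz, rfl⟩⟩

lemma specRad_nonneg (hn : 0 < n) (M : Matrix (Fin n) (Fin n) ℝ) : 0 ≤ specRad M := by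
  obtain ⟨x, z, hz, hx⟩ := S_nonempty hn M
  have hmem : x ∈ {x : ℝ | ∃ z ∈ (M.map (Complex.ofReal : ℝ → ℂ)).charpoly.roots, ‖z‖ = x} :=
    ⟨z, hz, hx⟩
  have := le_csSup (S_finite M).bddAbove hmem
  exact le_trans (hx ▸ norm_nonneg z) this

lemma eval_charpoly' (A : Matrix (Fin n) (Fin n) ℂ) (z : ℂ) :
    A.charpoly.eval z = (Matrix.scalar (Fin n) z - A).det := by
  rw [Matrix.charpoly, eval_det, Matrix.matPolyEquiv_charmatrix]
  simp

lemma spectralRadius_le (hn : 0 < n) (M : Matrix (Fin n) (Fin n) ℝ) :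
    spectralRadius ℂ (M.map (Complex.ofReal : ℝ → ℂ)) ≤ ENNReal.ofReal (specRad M) := by
  set A := M.map (Complex.ofReal : ℝ → ℂ)
  rw [spectralRadius]
  refine iSup₂_le fun z hz => ?_
  rw [spectrum.mem_iff] at hz
  have halg : algebraMap ℂ (Matrix (Fin n) (Fin n) ℂ) z = Matrix.scalar (Fin n) z := rfl
  have hdet : (Matrix.scalar (Fin n) z - A).det = 0 := by
    by_contra h
    exact hz (halg ▸ (Matrix.isUnit_iff_isUnit_det _).2 (isUnit_iff_ne_zero.2 h))
  have hroot : z ∈ A.charpoly.roots :=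
    (Polynomial.mem_roots (charpoly_ne A)).2
      (by rw [Polynomial.IsRoot, eval_charpoly' A z, hdet])
  have hle : ‖z‖ ≤ specRad M :=
    le_csSup (S_finite M).bddAbove ⟨z, hroot, rfl⟩
  calc (‖z‖₊ : ℝ≥0∞) = ENNReal.ofReal ‖z‖ := by
        simp [ENNReal.ofReal, norm_toNNReal]
    _ ≤ ENNReal.ofReal (specRad M) := ENNReal.ofReal_le_ofReal hle

lemma matrix_nnnorm_map_ofReal (X : Matrix (Fin n) (Fin n) ℝ) : ‖X.map (Complex.ofReal : ℝ → ℂ)‖ = ‖X‖ := by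
  have : ‖X.map (Complex.ofReal : ℝ → ℂ)‖₊ = ‖X‖₊ := by
    simp [Matrix.linfty_opNNNorm_def, Matrix.map_apply]
  calc ‖X.map (Complex.ofReal : ℝ → ℂ)‖ = (‖X.map (Complex.ofReal : ℝ → ℂ)‖₊ : ℝ) := rfl
    _ = (‖X‖₊ : ℝ) := by rw [this]
    _ = ‖X‖ := rfl

lemma map_pow' (X : Matrix (Fin n) (Fin n) ℝ) (k : ℕ) :
    (X.map (Complex.ofReal : ℝ → ℂ)) ^ k = (X ^ k).map Complex.ofReal := by
  have h : ∀ Y : Matrix (Fin n) (Fin n) ℝ, Y.map (Complex.ofReal : ℝ → ℂ)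
      = Complex.ofRealHom.mapMatrix Y := fun _ => rfl
  rw [h, h, ← map_pow]

lemma exists_good_pow (hn : 0 < n) (M : Matrix (Fin n) (Fin n) ℝ) {ε : ℝ} (hε : 0 < ε) :
    ∃ k : ℕ, 0 < k ∧ ‖M ^ k‖ < (specRad M + ε) ^ k := by
  set A := M.map (Complex.ofReal : ℝ → ℂ)
  set r := specRad M + ε with hr
  have hr0 : 0 < r := lt_of_lt_of_le hε (by simpa [hr] using specRad_nonneg hn M)
  have hlt : spectralRadius ℂ A < ENNReal.ofReal r :=
    lt_of_le_of_lt (spectralRadius_le hn M)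
      ((ENNReal.ofReal_lt_ofReal_iff hr0).2 (by linarith))
  have hev : ∀ᶠ k : ℕ in Filter.atTop,
      (‖A ^ k‖₊ : ℝ≥0∞) ^ (1 / (k : ℝ)) < ENNReal.ofReal r :=
    (spectrum.pow_nnnorm_pow_one_div_tendsto_nhds_spectralRadius A).eventually_lt_const hlt
  obtain ⟨k, hk, hk1⟩ := (hev.and (Filter.eventually_ge_atTop 1)).exists
  refine ⟨k, hk1, ?_⟩
  have hkR : (0 : ℝ) < k := by exact_mod_cast hk1
  have h2 : ((‖A ^ k‖₊ : ℝ≥0∞) ^ (1 / (k : ℝ))) ^ (k : ℝ)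
      < (ENNReal.ofReal r) ^ (k : ℝ) := ENNReal.rpow_lt_rpow hk hkR
  rw [← ENNReal.rpow_mul, one_div, inv_mul_cancel₀ (ne_of_gt hkR), ENNReal.rpow_one,
    ENNReal.ofReal_rpow_of_pos hr0] at h2
  have h3 := (ENNReal.lt_ofReal_iff_toReal_lt ENNReal.coe_ne_top).1 h2
  rw [ENNReal.coe_toReal, coe_nnnorm, Real.rpow_natCast] at h3
  rwa [← matrix_nnnorm_map_ofReal, ← map_pow']


lemma matrix_norm_construct (hn : 0 < n) (M : Matrix (Fin n) (Fin n) ℝ) {r : ℝ} (hr : 0 < r)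
    {k : ℕ} (hk : 0 < k) (hMk : ‖M ^ k‖ ≤ r ^ k) :
    ∃ N : Matrix (Fin n) (Fin n) ℝ → ℝ,
      (∀ X, 0 ≤ N X) ∧
      (∀ X, N X = 0 ↔ X = 0) ∧
      (∀ (c : ℝ) (X), N (c • X) = |c| * N X) ∧
      (∀ X Y, N (X + Y) ≤ N X + N Y) ∧
      (∀ X Y, N (X * Y) ≤ N X * N Y) ∧
      N M ≤ r := by
  haveI : Nonempty (Fin n) := Fin.pos_iff_nonempty.1 hn
  set P : Matrix (Fin n) (Fin n) ℝ := r⁻¹ • M with hP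
  have hMP : M = r • P := by
    rw [hP, smul_smul, mul_inv_cancel₀ (ne_of_gt hr), one_smul]
  have hPk : ‖P ^ k‖ ≤ 1 := by
    rw [hP, smul_pow, norm_smul, Real.norm_eq_abs, abs_pow, abs_inv, abs_of_pos hr]
    rw [inv_pow]
    calc (r ^ k)⁻¹ * ‖M ^ k‖ ≤ (r ^ k)⁻¹ * r ^ k :=
          mul_le_mul_of_nonneg_left hMk (by positivity)
      _ = 1 := inv_mul_cancel₀ (by positivity)
  -- the constant C bounding all powers of P
  obtain ⟨C, hC⟩ : ∃ C : ℝ, ∀ m : ℕ, ‖P ^ m‖ ≤ C := by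
    refine ⟨(Finset.range k).sup' (by simp [hk.ne']) (fun j => ‖P ^ j‖), fun m => ?_⟩
    have hmod : m % k < k := Nat.mod_lt _ hk
    have hj : ‖P ^ (m % k)‖ ≤ (Finset.range k).sup' (by simp [hk.ne']) (fun j => ‖P ^ j‖) :=
      Finset.le_sup' (fun j => ‖P ^ j‖) (Finset.mem_range.2 hmod)
    rcases Nat.eq_zero_or_pos (m / k) with hq | hq
    · have : m = m % k := by
        conv_lhs => rw [← Nat.div_add_mod m k, hq, Nat.mul_zero, Nat.zero_add]
      rw [this]; exact hj
    · have hm : m = k * (m / k) + m % k := (Nat.div_add_mod m k).symm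
      calc ‖P ^ m‖ = ‖(P ^ k) ^ (m / k) * P ^ (m % k)‖ := by rw [← pow_mul, ← pow_add, ← hm]
        _ ≤ ‖(P ^ k) ^ (m / k)‖ * ‖P ^ (m % k)‖ := norm_mul_le _ _
        _ ≤ 1 * ‖P ^ (m % k)‖ := by
            refine mul_le_mul_of_nonneg_right ?_ (norm_nonneg _)
            calc ‖(P ^ k) ^ (m / k)‖ ≤ ‖P ^ k‖ ^ (m / k) := norm_pow_le' _ hq
              _ ≤ 1 := pow_le_one₀ (norm_nonneg _) hPk
        _ = ‖P ^ (m % k)‖ := one_mul _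
        _ ≤ _ := hj
  have hC0 : 0 ≤ C := (norm_nonneg (P ^ 0)).trans (hC 0)
  -- the auxiliary norm Q
  set Q : Matrix (Fin n) (Fin n) ℝ → ℝ :=
    fun V => sSup {t | ∃ m : ℕ, t = ‖P ^ m * V‖} with hQdef
  have hQne : ∀ V, {t | ∃ m : ℕ, t = ‖P ^ m * V‖}.Nonempty :=
    fun V => ⟨‖V‖, 0, by rw [pow_zero, one_mul]⟩
  have hQbdd : ∀ V, BddAbove {t | ∃ m : ℕ, t = ‖P ^ m * V‖} := by
    intro V
    refine ⟨C * ‖V‖, fun t ht => ?_⟩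
    obtain ⟨m, rfl⟩ := ht
    calc ‖P ^ m * V‖ ≤ ‖P ^ m‖ * ‖V‖ := norm_mul_le _ _
      _ ≤ C * ‖V‖ := mul_le_mul_of_nonneg_right (hC m) (norm_nonneg _)
  have hQge : ∀ V, ‖V‖ ≤ Q V :=
    fun V => le_csSup (hQbdd V) ⟨0, by rw [pow_zero, one_mul]⟩
  have hQle : ∀ V, Q V ≤ C * ‖V‖ := by
    intro V
    refine csSup_le (hQne V) fun t ht => ?_
    obtain ⟨m, rfl⟩ := ht
    calc ‖P ^ m * V‖ ≤ ‖P ^ m‖ * ‖V‖ := norm_mul_le _ _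
      _ ≤ C * ‖V‖ := mul_le_mul_of_nonneg_right (hC m) (norm_nonneg _)
  have hQ0 : ∀ V, 0 ≤ Q V := fun V => (norm_nonneg V).trans (hQge V)
  have hQP : ∀ V, Q (P * V) ≤ Q V := by
    intro V
    refine csSup_le (hQne _) fun t ht => ?_
    obtain ⟨m, rfl⟩ := ht
    exact le_csSup (hQbdd V) ⟨m + 1, by rw [pow_succ, mul_assoc]⟩
  have hQadd : ∀ V W, Q (V + W) ≤ Q V + Q W := by
    intro V W
    refine csSup_le (hQne _) fun t ht => ?_
    obtain ⟨m, rfl⟩ := ht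
    calc ‖P ^ m * (V + W)‖ = ‖P ^ m * V + P ^ m * W‖ := by rw [mul_add]
      _ ≤ ‖P ^ m * V‖ + ‖P ^ m * W‖ := norm_add_le _ _
      _ ≤ Q V + Q W := add_le_add (le_csSup (hQbdd V) ⟨m, rfl⟩) (le_csSup (hQbdd W) ⟨m, rfl⟩)
  have hQsmul_le : ∀ (c : ℝ) V, Q (c • V) ≤ |c| * Q V := by
    intro c V
    refine csSup_le (hQne _) fun t ht => ?_
    obtain ⟨m, rfl⟩ := ht
    calc ‖P ^ m * (c • V)‖ = |c| * ‖P ^ m * V‖ := by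
          rw [mul_smul_comm, norm_smul, Real.norm_eq_abs]
      _ ≤ |c| * Q V :=
          mul_le_mul_of_nonneg_left (le_csSup (hQbdd V) ⟨m, rfl⟩) (abs_nonneg c)
  have hQsmul : ∀ (c : ℝ) V, Q (c • V) = |c| * Q V := by
    intro c V
    rcases eq_or_ne c 0 with rfl | hc
    · simp only [abs_zero, zero_mul]
      refine le_antisymm ?_ (hQ0 _)
      simpa using hQsmul_le 0 V
    · refine le_antisymm (hQsmul_le c V) ?_
      have := hQsmul_le c⁻¹ (c • V)
      rw [smul_smul, inv_mul_cancel₀ hc, one_smul, abs_inv] at this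
      calc |c| * Q V ≤ |c| * (|c|⁻¹ * Q (c • V)) := mul_le_mul_of_nonneg_left this (abs_nonneg c)
        _ = Q (c • V) := by
            rw [← mul_assoc, mul_inv_cancel₀ (abs_ne_zero.2 hc), one_mul]
  have hQzero : Q 0 = 0 := by
    have := hQsmul 0 0
    simpa using this
  have hQeq0 : ∀ V, Q V = 0 → V = 0 := by
    intro V hV
    have := hQge V
    rw [hV] at this
    exact norm_le_zero_iff.1 this
  -- the norm N
  set N : Matrix (Fin n) (Fin n) ℝ → ℝ :=
    fun X => sSup {t | ∃ V, Q V ≤ 1 ∧ t = Q (X * V)} with hNdef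
  have hNmem0 : ∀ X, (0 : ℝ) ∈ {t | ∃ V, Q V ≤ 1 ∧ t = Q (X * V)} :=
    fun X => ⟨0, by rw [hQzero]; exact zero_le_one, by rw [mul_zero, hQzero]⟩
  have hNne : ∀ X, {t | ∃ V, Q V ≤ 1 ∧ t = Q (X * V)}.Nonempty := fun X => ⟨0, hNmem0 X⟩
  have hNbdd : ∀ X, BddAbove {t | ∃ V, Q V ≤ 1 ∧ t = Q (X * V)} := by
    intro X
    refine ⟨C * ‖X‖, fun t ht => ?_⟩
    obtain ⟨V, hV, rfl⟩ := ht
    calc Q (X * V) ≤ C * ‖X * V‖ := hQle _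
      _ ≤ C * (‖X‖ * ‖V‖) := mul_le_mul_of_nonneg_left (norm_mul_le _ _) hC0
      _ = C * ‖X‖ * ‖V‖ := (mul_assoc _ _ _).symm
      _ ≤ C * ‖X‖ * Q V := mul_le_mul_of_nonneg_left (hQge V) (by positivity)
      _ ≤ C * ‖X‖ * 1 := mul_le_mul_of_nonneg_left hV (by positivity)
      _ = C * ‖X‖ := mul_one _
  have hN0 : ∀ X, 0 ≤ N X := fun X => le_csSup (hNbdd X) (hNmem0 X)
  -- key estimate
  have hkey : ∀ X V, Q (X * V) ≤ N X * Q V := by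
    intro X V
    rcases eq_or_ne V 0 with rfl | hV
    · rw [mul_zero, hQzero, mul_zero]
    · have hQVpos : 0 < Q V :=
        lt_of_le_of_ne (hQ0 V) (fun h => hV (hQeq0 V h.symm))
      have h1 : Q ((Q V)⁻¹ • V) ≤ 1 := by
        rw [hQsmul, abs_inv, abs_of_pos hQVpos, inv_mul_cancel₀ (ne_of_gt hQVpos)]
      have h2 : Q (X * ((Q V)⁻¹ • V)) ≤ N X :=
        le_csSup (hNbdd X) ⟨(Q V)⁻¹ • V, h1, rfl⟩
      rw [mul_smul_comm, hQsmul, abs_inv, abs_of_pos hQVpos] at h2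
      calc Q (X * V) = Q V * ((Q V)⁻¹ * Q (X * V)) := by
            rw [← mul_assoc, mul_inv_cancel₀ (ne_of_gt hQVpos), one_mul]
        _ ≤ Q V * N X := mul_le_mul_of_nonneg_left h2 (le_of_lt hQVpos)
        _ = N X * Q V := mul_comm _ _
  have hNsmul_le : ∀ (c : ℝ) X, N (c • X) ≤ |c| * N X := by
    intro c X
    refine csSup_le (hNne _) fun t ht => ?_
    obtain ⟨V, hV, rfl⟩ := ht
    calc Q ((c • X) * V) = |c| * Q (X * V) := by rw [smul_mul_assoc, hQsmul]
      _ ≤ |c| * (N X * Q V) := mul_le_mul_of_nonneg_left (hkey X V) (abs_nonneg c)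
      _ ≤ |c| * (N X * 1) :=
          mul_le_mul_of_nonneg_left (mul_le_mul_of_nonneg_left hV (hN0 X)) (abs_nonneg c)
      _ = |c| * N X := by rw [mul_one]
  refine ⟨N, hN0, ?_, ?_, ?_, ?_, ?_⟩
  · -- definiteness
    intro X
    constructor
    · intro hNX
      have h1 : Q (X * 1) ≤ N X * Q 1 := hkey X 1
      rw [mul_one, hNX, zero_mul] at h1
      exact hQeq0 X (le_antisymm h1 (hQ0 X))
    · rintro rfl
      refine le_antisymm ?_ (hN0 0)
      refine csSup_le (hNne _) fun t ht => ?_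
      obtain ⟨V, _, rfl⟩ := ht
      rw [zero_mul, hQzero]
  · -- homogeneity
    intro c X
    rcases eq_or_ne c 0 with rfl | hc
    · simp only [abs_zero, zero_mul, zero_smul]
      refine le_antisymm ?_ (hN0 0)
      refine csSup_le (hNne _) fun t ht => ?_
      obtain ⟨V, _, rfl⟩ := ht
      rw [zero_mul, hQzero]
    · refine le_antisymm (hNsmul_le c X) ?_
      have := hNsmul_le c⁻¹ (c • X)
      rw [smul_smul, inv_mul_cancel₀ hc, one_smul, abs_inv] at this
      calc |c| * N X ≤ |c| * (|c|⁻¹ * N (c • X)) := mul_le_mul_of_nonneg_left this (abs_nonneg c)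
        _ = N (c • X) := by rw [← mul_assoc, mul_inv_cancel₀ (abs_ne_zero.2 hc), one_mul]
  · -- triangle
    intro X Y
    refine csSup_le (hNne _) fun t ht => ?_
    obtain ⟨V, hV, rfl⟩ := ht
    calc Q ((X + Y) * V) = Q (X * V + Y * V) := by rw [add_mul]
      _ ≤ Q (X * V) + Q (Y * V) := hQadd _ _
      _ ≤ N X * Q V + N Y * Q V := add_le_add (hkey X V) (hkey Y V)
      _ ≤ N X * 1 + N Y * 1 :=
          add_le_add (mul_le_mul_of_nonneg_left hV (hN0 X))
            (mul_le_mul_of_nonneg_left hV (hN0 Y))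
      _ = N X + N Y := by rw [mul_one, mul_one]
  · -- submultiplicativity
    intro X Y
    refine csSup_le (hNne _) fun t ht => ?_
    obtain ⟨V, hV, rfl⟩ := ht
    calc Q (X * Y * V) = Q (X * (Y * V)) := by rw [mul_assoc]
      _ ≤ N X * Q (Y * V) := hkey X _
      _ ≤ N X * (N Y * Q V) := mul_le_mul_of_nonneg_left (hkey Y V) (hN0 X)
      _ ≤ N X * (N Y * 1) :=
          mul_le_mul_of_nonneg_left (mul_le_mul_of_nonneg_left hV (hN0 Y)) (hN0 X)
      _ = N X * N Y := by rw [mul_one]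
  · -- N M ≤ r
    have hNP : N P ≤ 1 := by
      refine csSup_le (hNne _) fun t ht => ?_
      obtain ⟨V, hV, rfl⟩ := ht
      exact (hQP V).trans hV
    calc N M = N (r • P) := by rw [← hMP]
      _ ≤ |r| * N P := hNsmul_le r P
      _ ≤ |r| * 1 := mul_le_mul_of_nonneg_left hNP (abs_nonneg r)
      _ = r := by rw [mul_one, abs_of_pos hr]


/-- For any real square matrix `M` and any `ε > 0` there exists a
submultiplicative matrix norm `N` with `N(M) ≤ ρ(M) + ε`. -/
theorem stmt_5 (n : ℕ) (M : Matrix (Fin n) (Fin n) ℝ) (ε : ℝ) (hε : 0 < ε) :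
    ∃ N : Matrix (Fin n) (Fin n) ℝ → ℝ,
      (∀ X, 0 ≤ N X) ∧
      (∀ X, N X = 0 ↔ X = 0) ∧
      (∀ (c : ℝ) (X), N (c • X) = |c| * N X) ∧
      (∀ X Y, N (X + Y) ≤ N X + N Y) ∧
      (∀ X Y, N (X * Y) ≤ N X * N Y) ∧
      N M ≤ specRad M + ε := by
  rcases Nat.eq_zero_or_pos n with rfl | hn
  · -- trivial case `n = 0`
    refine ⟨fun _ => 0, fun _ => le_refl 0,
      fun X => ⟨fun _ => Subsingleton.elim X 0, fun _ => rfl⟩,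
      fun c X => by rw [mul_zero], fun X Y => by norm_num, fun X Y => by norm_num, ?_⟩
    have hsr : specRad M = 0 := by
      have hcp : (M.map (Complex.ofReal : ℝ → ℂ)).charpoly = 1 := by
        have hmono := Matrix.charpoly_monic (M.map (Complex.ofReal : ℝ → ℂ))
        have hdeg : (M.map (Complex.ofReal : ℝ → ℂ)).charpoly.natDegree = 0 := by
          rw [Matrix.charpoly_natDegree_eq_dim]; simp
        exact hmono.natDegree_eq_zero.1 hdeg
      rw [specRad, hcp]
      simp [Real.sSup_empty]
    show (0:ℝ) ≤ specRad M + ε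
    rw [hsr]
    linarith
  · obtain ⟨k, hk, hMk⟩ := exists_good_pow hn M hε
    have hr0 : 0 < specRad M + ε := lt_of_lt_of_le hε (by simpa using specRad_nonneg hn M)
    exact matrix_norm_construct hn M hr0 hk (le_of_lt hMk)
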